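/- If there exists a unitary U_AB = Σ_i |i⟩⟨i|_A ⊗ U^B_i such that U^B_i ρ^B_{ij} (U^B_j)† = |ρ^B_{ij}| for all i, j, then the max-relative entropy of IQ coherence equals log(1 + C^{A|B}_{l1}(ρ_AB)). In particular, this equality holds for every bipartite pure state. -/

import Mathlib

open scoped BigOperators ComplexOrder Kronecker

/-- The square root of a positive semidefinite matrix, as `Matrix.PosSemidef.sqrt` was defined
in the older Mathlib (since removed): `U * diagonal (√λ) * U⋆` for the eigendecomposition. -/
noncomputable def posSemidefSqrtOld {n : Type*} [Fintype n] [DecidableEq n] {P : Matrix n n ℂ}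
    (hP : P.PosSemidef) : Matrix n n ℂ :=
  (hP.1.eigenvectorUnitary : Matrix n n ℂ) *
    Matrix.diagonal ((↑) ∘ (√·) ∘ hP.1.eigenvalues) *
    (star hP.1.eigenvectorUnitary : Matrix n n ℂ)

/-- Trace norm: `‖P‖_tr = Tr √(Pᴴ P)`. -/
noncomputable def traceNorm {n : Type*} [Fintype n] [DecidableEq n] (P : Matrix n n ℂ) : ℝ :=
  ((posSemidefSqrtOld (Matrix.posSemidef_conjTranspose_mul_self P)).trace).re

/-- The B-blocks of an operator on H_A ⊗ H_B. -/
def blockB {A B : Type*} (Q : Matrix (A × B) (A × B) ℂ) (i j : A) : Matrix B B ℂ :=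
  fun b b' => Q (i, b) (j, b')

/-- l1 norm of IQ coherence: C^{A|B}_{l1}(ρ) = Σ_{i≠j} ‖ρ^B_{ij}‖_tr. -/
noncomputable def CIQl1 {A B : Type*} [Fintype A] [Fintype B] [DecidableEq A] [DecidableEq B]
    (ρ : Matrix (A × B) (A × B) ℂ) : ℝ :=
  ∑ i, ∑ j, if i = j then 0 else traceNorm (blockB ρ i j)

/-- The set of incoherent-quantum (IQ) states: convex combinations
Σ_k p_k σ^A_k ⊗ τ^B_k with each σ^A_k an incoherent (diagonal) state on A and
each τ^B_k a state on B. -/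
def IQstates (A B : Type*) [Fintype A] [Fintype B] [DecidableEq A] [DecidableEq B] :
    Set (Matrix (A × B) (A × B) ℂ) :=
  { σ | ∃ (k : ℕ) (w : Fin k → ℝ) (sA : Fin k → Matrix A A ℂ) (tB : Fin k → Matrix B B ℂ),
      (∀ m, 0 ≤ w m) ∧ (∑ m, w m = 1) ∧
      (∀ m, (sA m).PosSemidef ∧ (sA m).trace = 1 ∧ ∀ i j, i ≠ j → sA m i j = 0) ∧
      (∀ m, (tB m).PosSemidef ∧ (tB m).trace = 1) ∧
      σ = ∑ m, (w m : ℂ) • (sA m ⊗ₖ tB m) }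

/-- Max-relative entropy of IQ coherence:
C^{A|B}_max(ρ) = log₂ min {λ : ρ ≤ λσ for some σ ∈ IQ}. -/
noncomputable def CmaxIQ {A B : Type*} [Fintype A] [Fintype B] [DecidableEq A] [DecidableEq B]
    (ρ : Matrix (A × B) (A × B) ℂ) : ℝ :=
  Real.logb 2 (sInf {l : ℝ | ∃ σ ∈ IQstates A B, ((l : ℂ) • σ - ρ).PosSemidef})

section sqrtOld
open scoped MatrixOrder
variable {n : Type*} [Fintype n] [DecidableEq n]
lemma posSemidefSqrtOld_eq {P : Matrix n n ℂ} (hP : P.PosSemidef) :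
    posSemidefSqrtOld hP = CFC.sqrt P := by
  rw [CFC.sqrt_eq_cfc, cfc_nnreal_eq_real _ P, hP.1.cfc_eq]
  simp only [Matrix.IsHermitian.cfc, posSemidefSqrtOld, Unitary.conjStarAlgAut_apply]
  congr 3
  funext i
  simp [hP.eigenvalues_nonneg i]
lemma posSemidef_sqrtOld {P : Matrix n n ℂ} (hP : P.PosSemidef) :
    (posSemidefSqrtOld hP).PosSemidef := by
  rw [posSemidefSqrtOld_eq]
  exact Matrix.nonneg_iff_posSemidef.mp (CFC.sqrt_nonneg P)
lemma eq_sqrtOld_of_sq_eq {Q P : Matrix n n ℂ} (hQ : Q.PosSemidef) (hP : P.PosSemidef)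
    (h : Q ^ 2 = P) : Q = posSemidefSqrtOld hP := by
  rw [posSemidefSqrtOld_eq, eq_comm, CFC.sqrt_eq_iff P Q hP.nonneg hQ.nonneg, ← sq, h]
end sqrtOld

open Matrix

section helpers

variable {n : Type*} [Fintype n] [DecidableEq n]

lemma psd_diag_nonneg {M : Matrix n n ℂ} (hM : M.PosSemidef) (i : n) :
    0 ≤ M i i := by
  exact hM.diag_nonneg

lemma psd_trace_nonneg {M : Matrix n n ℂ} (hM : M.PosSemidef) : 0 ≤ M.trace :=
  Finset.sum_nonneg fun i _ => psd_diag_nonneg hM i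

lemma psd_trace_re {M : Matrix n n ℂ} (hM : M.PosSemidef) : M.trace = (M.trace.re : ℂ) := by
  have h := psd_trace_nonneg hM
  rw [Complex.nonneg_iff] at h
  exact Complex.ext rfl (by simpa using h.2.symm)

lemma psd_trace_re_nonneg {M : Matrix n n ℂ} (hM : M.PosSemidef) : 0 ≤ M.trace.re := by
  have h := psd_trace_nonneg hM
  rw [Complex.nonneg_iff] at h; exact h.1

lemma traceNorm_nonneg (P : Matrix n n ℂ) : 0 ≤ traceNorm P :=
  psd_trace_re_nonneg (posSemidef_sqrtOld (Matrix.posSemidef_conjTranspose_mul_self P))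

lemma traceNorm_coe (P : Matrix n n ℂ) :
    ((posSemidefSqrtOld (Matrix.posSemidef_conjTranspose_mul_self P)).trace) = (traceNorm P : ℂ) :=
  psd_trace_re (posSemidef_sqrtOld (Matrix.posSemidef_conjTranspose_mul_self P))

lemma psd_of_trace_zero {M : Matrix n n ℂ} (hM : M.PosSemidef) (h : M.trace = 0) : M = 0 := by
  exact hM.trace_eq_zero_iff.mp h

lemma psd_real_smul {M : Matrix n n ℂ} (hM : M.PosSemidef) {r : ℝ} (hr : 0 ≤ r) :
    ((r : ℂ) • M).PosSemidef := by
  refine Matrix.PosSemidef.of_dotProduct_mulVec_nonneg ?_ ?_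
  · unfold Matrix.IsHermitian
    rw [Matrix.conjTranspose_smul, hM.1]
    simp [Complex.conj_ofReal]
  · intro x
    rw [Matrix.smul_mulVec, dotProduct_smul]
    exact smul_nonneg (by exact_mod_cast Complex.zero_le_real.mpr hr) (hM.dotProduct_mulVec_nonneg x)

lemma psd_sum {ι : Type*} (s : Finset ι) (f : ι → Matrix n n ℂ)
    (h : ∀ i ∈ s, (f i).PosSemidef) : (∑ i ∈ s, f i).PosSemidef := by
  classical
  induction s using Finset.induction_on with
  | empty => simpa using Matrix.PosSemidef.zero
  | insert _ _ hx ih =>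
      rw [Finset.sum_insert hx]
      exact ((h _ (by simp)).add (ih fun i hi => h i (by simp [hi])))

lemma sum_mulVec' {ι : Type*} (s : Finset ι) (f : ι → Matrix n n ℂ) (v : n → ℂ) :
    (∑ j ∈ s, f j) *ᵥ v = ∑ j ∈ s, f j *ᵥ v := by
  ext b
  simp only [Matrix.mulVec, dotProduct, Matrix.sum_apply, Finset.sum_mul,
    Finset.sum_apply]
  rw [Finset.sum_comm]

lemma dotProduct_sum' {ι : Type*} (s : Finset ι) (u : n → ℂ) (f : ι → n → ℂ) :
    u ⬝ᵥ (∑ j ∈ s, f j) = ∑ j ∈ s, u ⬝ᵥ f j := by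
  simp only [dotProduct, Finset.sum_apply, Finset.mul_sum]
  rw [Finset.sum_comm]

lemma psd_vecMulVec (v : n → ℂ) : (Matrix.vecMulVec v (star v)).PosSemidef := by
  refine Matrix.PosSemidef.of_dotProduct_mulVec_nonneg ?_ ?_
  · unfold Matrix.IsHermitian
    ext b b'
    simp [Matrix.conjTranspose_apply, Matrix.vecMulVec_apply, mul_comm]
  · intro x
    have : star x ⬝ᵥ (Matrix.vecMulVec v (star v)) *ᵥ x
        = star (star v ⬝ᵥ x) * (star v ⬝ᵥ x) := by
      simp only [dotProduct, Matrix.mulVec, Matrix.vecMulVec_apply, Pi.star_apply,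
        Finset.mul_sum, Finset.sum_mul, star_sum, star_mul']
      rw [Finset.sum_comm]
      apply Finset.sum_congr rfl; intro i _
      apply Finset.sum_congr rfl; intro j _
      simp [mul_comm, mul_left_comm, mul_assoc]
    rw [this]
    exact star_mul_self_nonneg _

lemma psd_stdBasis (b : n) : (Matrix.single b b (1:ℂ)).PosSemidef := by
  have : Matrix.single b b (1:ℂ) = Matrix.vecMulVec (Pi.single b 1) (star (Pi.single b 1)) := by
    ext i j
    simp [Matrix.single, Matrix.vecMulVec_apply, Pi.single_apply, Pi.star_apply, eq_comm]
    aesop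
  rw [this]; exact psd_vecMulVec _

end helpers

section bipartite

variable {A B : Type*} [Fintype A] [Fintype B] [DecidableEq A] [DecidableEq B]

/-- restriction of a vector on `A × B` to the `i`-th block -/
def subv {A B : Type*} (x : A × B → ℂ) (i : A) : B → ℂ := fun b => x (i, b)

lemma trace_eq_sum_blockB (Q : Matrix (A × B) (A × B) ℂ) :
    Q.trace = ∑ i, (blockB Q i i).trace := by
  simp [Matrix.trace, Matrix.diag, blockB, Fintype.sum_prod_type]

lemma quad_blockB (Q : Matrix (A × B) (A × B) ℂ) (x : A × B → ℂ) :
    star x ⬝ᵥ Q *ᵥ x = ∑ i, ∑ j, star (subv x i) ⬝ᵥ (blockB Q i j) *ᵥ (subv x j) := by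
  simp only [dotProduct, Matrix.mulVec, Matrix.of_apply, blockB, subv, Pi.star_apply,
    Fintype.sum_prod_type, Finset.mul_sum, Finset.sum_mul]
  exact Finset.sum_congr rfl fun i _ => Finset.sum_comm

lemma conj_quad (V W P : Matrix B B ℂ) (x y : B → ℂ) :
    star x ⬝ᵥ (Vᴴ * P * W) *ᵥ y = star (V *ᵥ x) ⬝ᵥ P *ᵥ (W *ᵥ y) := by
  simp only [Matrix.star_mulVec, Matrix.dotProduct_mulVec, ← Matrix.vecMul_vecMul]

lemma blockB_smul_sub (c : ℂ) (σ ρ : Matrix (A × B) (A × B) ℂ) (i j : A) :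
    blockB (c • σ - ρ) i j = c • blockB σ i j - blockB ρ i j := rfl

lemma blockB_conjT {ρ : Matrix (A × B) (A × B) ℂ} (hρ : ρ.IsHermitian) (i j : A) :
    (blockB ρ i j)ᴴ = blockB ρ j i := by
  ext b b'
  simp only [Matrix.conjTranspose_apply, blockB]
  rw [← Matrix.conjTranspose_apply, hρ.eq]

end bipartite

section main

variable {A B : Type*} [Fintype A] [Fintype B] [DecidableEq A] [DecidableEq B]

lemma sum_quad_trace (U V M : Matrix B B ℂ) :
    ∑ b : B, (star (fun b2 => star (U b b2)) ⬝ᵥ M *ᵥ (fun b2 => star (V b b2)))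
      = (U * M * Vᴴ).trace := by
  simp only [Matrix.trace, Matrix.diag, Matrix.mul_apply, Matrix.conjTranspose_apply,
    dotProduct, Matrix.mulVec, Pi.star_apply, star_star, Finset.mul_sum, Finset.sum_mul]
  apply Finset.sum_congr rfl; intro b _
  rw [Finset.sum_comm]
  apply Finset.sum_congr rfl; intro b1 _
  apply Finset.sum_congr rfl; intro b2 _
  ring

lemma sum_quad_eq_trace (U : A → Matrix B B ℂ) (Q : Matrix (A × B) (A × B) ℂ) :
    ∑ b : B, (star (fun p : A × B => star (U p.1 b p.2)) ⬝ᵥ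
        Q *ᵥ (fun p : A × B => star (U p.1 b p.2)))
      = ∑ i, ∑ j, (U i * blockB Q i j * (U j)ᴴ).trace := by
  have h1 : ∀ b : B, (star (fun p : A × B => star (U p.1 b p.2)) ⬝ᵥ
        Q *ᵥ (fun p : A × B => star (U p.1 b p.2)))
      = ∑ i, ∑ j, (star (fun b2 => star (U i b b2)) ⬝ᵥ
          (blockB Q i j) *ᵥ (fun b2 => star (U j b b2))) := fun b =>
    quad_blockB Q (fun p : A × B => star (U p.1 b p.2))
  rw [Finset.sum_congr rfl fun b _ => h1 b, Finset.sum_comm]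
  apply Finset.sum_congr rfl; intro i _
  rw [Finset.sum_comm]
  apply Finset.sum_congr rfl; intro j _
  exact sum_quad_trace (U i) (U j) (blockB Q i j)

lemma lower_bound (ρ : Matrix (A × B) (A × B) ℂ)
    (U : A → Matrix B B ℂ) (hU : ∀ i, U i ∈ Matrix.unitaryGroup B ℂ)
    (P : A → A → Matrix B B ℂ)
    (hP : ∀ i j, U i * blockB ρ i j * (U j)ᴴ = P i j)
    (hPtrace : ∑ i, ∑ j, (P i j).trace = ((1 + CIQl1 ρ : ℝ) : ℂ))
    {l : ℝ} {σ : Matrix (A × B) (A × B) ℂ} (hσ : σ ∈ IQstates A B)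
    (hpsd : ((l : ℂ) • σ - ρ).PosSemidef) :
    1 + CIQl1 ρ ≤ l := by
  obtain ⟨k, w, sA, tB, hw0, hw1, hsA, htB, hσeq⟩ := hσ
  have hoff : ∀ i j : A, i ≠ j → blockB σ i j = 0 := by
    intro i j hij
    ext b b'
    rw [hσeq]
    simp [blockB, Matrix.sum_apply, Matrix.kroneckerMap_apply, (hsA _).2.2 i j hij]
  have hσtr : σ.trace = 1 := by
    rw [hσeq, Matrix.trace_sum]
    simp only [Matrix.trace_smul, Matrix.trace_kronecker]
    have : ∀ m, (sA m).trace * (tB m).trace = 1 := fun m => by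
      rw [(hsA m).2.1, (htB m).2, one_mul]
    simp only [smul_eq_mul, this, mul_one]
    exact_mod_cast congrArg (fun r : ℝ => (r : ℂ)) hw1
  have hσblocktr : ∑ i, ∑ j, (U i * blockB σ i j * (U j)ᴴ).trace = 1 := by
    have hdiag : ∀ i : A, (U i * blockB σ i i * (U i)ᴴ).trace = (blockB σ i i).trace := by
      intro i
      rw [Matrix.trace_mul_cycle, ← Matrix.star_eq_conjTranspose,
        Matrix.mem_unitaryGroup_iff'.mp (hU i), Matrix.one_mul]
    have : ∀ i j : A, (U i * blockB σ i j * (U j)ᴴ).trace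
        = if i = j then (blockB σ i i).trace else 0 := by
      intro i j
      by_cases hij : i = j
      · subst hij; simp [hdiag]
      · simp [hij, hoff i j hij]
    rw [Finset.sum_congr rfl fun i _ => Finset.sum_congr rfl fun j _ => this i j]
    simp only [Finset.sum_ite_eq, Finset.mem_univ, if_true]
    rw [← trace_eq_sum_blockB, hσtr]
  have key : (0 : ℂ) ≤ ∑ b : B, (star (fun p : A × B => star (U p.1 b p.2)) ⬝ᵥ
      ((l : ℂ) • σ - ρ) *ᵥ (fun p : A × B => star (U p.1 b p.2))) :=
    Finset.sum_nonneg fun b _ => hpsd.dotProduct_mulVec_nonneg _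
  rw [sum_quad_eq_trace] at key
  have expand : ∀ i j : A, (U i * blockB ((l : ℂ) • σ - ρ) i j * (U j)ᴴ).trace
      = (l : ℂ) * (U i * blockB σ i j * (U j)ᴴ).trace - (P i j).trace := by
    intro i j
    rw [blockB_smul_sub, Matrix.mul_sub, Matrix.sub_mul, Matrix.trace_sub, hP,
      Matrix.mul_smul, Matrix.smul_mul, Matrix.trace_smul, smul_eq_mul]
  rw [Finset.sum_congr rfl fun i _ => Finset.sum_congr rfl fun j _ => expand i j] at key
  simp only [Finset.sum_sub_distrib, ← Finset.mul_sum] at key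
  rw [hσblocktr, hPtrace, mul_one] at key
  rw [Complex.nonneg_iff] at key
  have := key.1
  simp only [Complex.sub_re, Complex.ofReal_re, Complex.zero_re] at this
  linarith
end main

lemma trace_stdBasis {n : Type*} [Fintype n] [DecidableEq n] (b : n) :
    (Matrix.single b b (1:ℂ)).trace = 1 := by
  simp [Matrix.trace, Matrix.diag, Matrix.single, Matrix.of_apply]

lemma upper_bound {A B : Type*} [Fintype A] [Fintype B] [DecidableEq A] [DecidableEq B]
    (ρ : Matrix (A × B) (A × B) ℂ) (hρ : ρ.PosSemidef) (htr : ρ.trace = 1)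
    (U : A → Matrix B B ℂ) (hU : ∀ i, U i ∈ Matrix.unitaryGroup B ℂ)
    (P : A → A → Matrix B B ℂ)
    (hP : ∀ i j, U i * blockB ρ i j * (U j)ᴴ = P i j)
    (hPsd : ∀ i j, (P i j).PosSemidef)
    (hPtrace : ∑ i, ∑ j, (P i j).trace = ((1 + CIQl1 ρ : ℝ) : ℂ))
    (hC : 0 ≤ CIQl1 ρ) :
    ∃ σ ∈ IQstates A B, (((1 + CIQl1 ρ : ℝ) : ℂ) • σ - ρ).PosSemidef := by
  classical
  set lam : ℝ := 1 + CIQl1 ρ with hlamdef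
  have hlampos : 0 < lam := by simp only [hlamdef]; linarith
  have hABne : Nonempty (A × B) := by
    by_contra h
    rw [not_nonempty_iff] at h
    rw [Matrix.trace, Finset.univ_eq_empty, Finset.sum_empty] at htr
    exact one_ne_zero htr.symm
  have hAne : Nonempty A := ⟨hABne.some.1⟩
  have hBne : Nonempty B := ⟨hABne.some.2⟩
  have hUstar : ∀ i, (U i)ᴴ * U i = 1 := fun i => by
    rw [← Matrix.star_eq_conjTranspose]
    exact Matrix.mem_unitaryGroup_iff'.mp (hU i)
  have hUstar' : ∀ i, U i * (U i)ᴴ = 1 := fun i => by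
    rw [← Matrix.star_eq_conjTranspose]
    exact Matrix.mem_unitaryGroup_iff.mp (hU i)
  have hrec : ∀ i j, blockB ρ i j = (U i)ᴴ * P i j * U j := by
    intro i j
    rw [← hP i j]
    symm
    calc (U i)ᴴ * (U i * blockB ρ i j * (U j)ᴴ) * U j
        = ((U i)ᴴ * U i) * blockB ρ i j * ((U j)ᴴ * U j) := by
          simp only [Matrix.mul_assoc]
      _ = blockB ρ i j := by rw [hUstar, hUstar, Matrix.one_mul, Matrix.mul_one]
  have hPsymm : ∀ i j, P j i = P i j := by
    intro i j
    rw [← hP j i, ← blockB_conjT hρ.1 i j]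
    calc U j * (blockB ρ i j)ᴴ * (U i)ᴴ
        = (U i * blockB ρ i j * (U j)ᴴ)ᴴ := by
          simp only [Matrix.conjTranspose_mul, Matrix.conjTranspose_conjTranspose,
            Matrix.mul_assoc]
      _ = P i j := by rw [hP]; exact (hPsd i j).1
  -- the IQ state
  set Q : A → Matrix B B ℂ := fun i => ((lam⁻¹ : ℝ) : ℂ) • ((U i)ᴴ * (∑ j, P i j) * U i)
    with hQdef
  have hQpsd : ∀ i, (Q i).PosSemidef := fun i =>
    psd_real_smul ((psd_sum Finset.univ _ (fun j _ => hPsd i j)).conjTranspose_mul_mul_same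
      (U i)) (inv_nonneg.mpr hlampos.le)
  have hQtr : ∑ i, (Q i).trace = 1 := by
    have h1 : ∀ i, ((U i)ᴴ * (∑ j, P i j) * U i).trace = ∑ j, (P i j).trace := by
      intro i
      rw [Matrix.trace_mul_cycle, hUstar', Matrix.one_mul, Matrix.trace_sum]
    simp only [hQdef, Matrix.trace_smul, smul_eq_mul, h1, ← Finset.mul_sum]
    rw [hPtrace, ← Complex.ofReal_mul, inv_mul_cancel₀ hlampos.ne']
    norm_num
  set σ : Matrix (A × B) (A × B) ℂ :=
    Matrix.of (fun p q => if p.1 = q.1 then Q p.1 p.2 q.2 else 0) with hσdef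
  have hσblock : ∀ i j, blockB σ i j = if i = j then Q i else 0 := by
    intro i j
    ext b b'
    by_cases hij : i = j <;> simp [blockB, hσdef, hij]
  -- IQ membership
  set t : A → ℝ := fun i => ((Q i).trace).re with htdef
  have htnn : ∀ i, 0 ≤ t i := fun i => psd_trace_re_nonneg (hQpsd i)
  have htQ : ∀ i, (Q i).trace = (t i : ℂ) := fun i => psd_trace_re (hQpsd i)
  set tB' : A → Matrix B B ℂ := fun i =>
    if t i = 0 then Matrix.single hBne.some hBne.some 1
    else (((t i)⁻¹ : ℝ) : ℂ) • Q i with htBdef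
  have hQ0 : ∀ i, (t i : ℂ) • tB' i = Q i := by
    intro i
    by_cases h : t i = 0
    · have : Q i = 0 := psd_of_trace_zero (hQpsd i) (by rw [htQ i, h]; simp)
      simp [htBdef, h, this]
    · rw [htBdef]
      simp only [h, if_false, smul_smul, ← Complex.ofReal_mul, mul_inv_cancel₀ h]
      simp
  have hσsum : σ = ∑ i0 : A, Matrix.single i0 i0 (1:ℂ) ⊗ₖ Q i0 := by
    ext ⟨i, b⟩ ⟨j, b'⟩
    simp only [hσdef, Matrix.of_apply, Matrix.sum_apply, Matrix.kroneckerMap_apply,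
      Matrix.single, Matrix.of_apply, ite_mul, one_mul, zero_mul]
    by_cases hij : i = j
    · subst hij
      rw [Finset.sum_eq_single i (fun i0 _ hne => by simp [hne]) (by simp)]
      simp
    · rw [Finset.sum_eq_zero]
      · simp [hij]
      · intro i0 _
        by_cases h1 : i0 = i
        · subst h1; simp [hij]
        · simp [h1]
  have hmem : σ ∈ IQstates A B := by
    refine ⟨Fintype.card A, fun m => t ((Fintype.equivFin A).symm m),
      fun m => Matrix.single ((Fintype.equivFin A).symm m)
        ((Fintype.equivFin A).symm m) 1,
      fun m => tB' ((Fintype.equivFin A).symm m),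
      fun m => htnn _, ?_, ?_, ?_, ?_⟩
    · rw [Equiv.sum_comp ((Fintype.equivFin A).symm) t]
      have : ∑ i, t i = (∑ i, (Q i).trace).re := by
        rw [Complex.re_sum]
      rw [this, hQtr]; simp
    · intro m
      refine ⟨psd_stdBasis _, trace_stdBasis _, ?_⟩
      intro i j hij
      simp [Matrix.single, Matrix.of_apply]
      intro h1 h2; exact absurd (h1 ▸ h2) hij
    · intro m
      rw [htBdef]
      by_cases h : t ((Fintype.equivFin A).symm m) = 0
      · simp only [h, if_true]
        exact ⟨psd_stdBasis _, trace_stdBasis _⟩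
      · simp only [h, if_false]
        refine ⟨psd_real_smul (hQpsd _) (inv_nonneg.mpr (htnn _)), ?_⟩
        rw [Matrix.trace_smul, htQ, smul_eq_mul, ← Complex.ofReal_mul,
          inv_mul_cancel₀ h]
        simp
    · rw [hσsum, ← Equiv.sum_comp ((Fintype.equivFin A).symm)
        (fun i0 => Matrix.single i0 i0 (1:ℂ) ⊗ₖ Q i0)]
      apply Finset.sum_congr rfl
      intro m _
      rw [← hQ0, Matrix.kronecker_smul]
  refine ⟨σ, hmem, ?_⟩
  -- positive semidefiniteness of lam • σ - ρ
  have hQherm : ∀ i, (Q i)ᴴ = Q i := fun i => (hQpsd i).1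
  refine Matrix.PosSemidef.of_dotProduct_mulVec_nonneg ?_ ?_
  · show ((lam : ℂ) • σ - ρ)ᴴ = _
    rw [Matrix.conjTranspose_sub, Matrix.conjTranspose_smul, hρ.1]
    congr 1
    have hσherm : σᴴ = σ := by
      ext ⟨i, b⟩ ⟨j, b'⟩
      simp only [Matrix.conjTranspose_apply, hσdef, Matrix.of_apply]
      by_cases hij : i = j
      · subst hij
        simp only [if_true]
        rw [← Matrix.conjTranspose_apply, hQherm]
      · simp [hij, Ne.symm hij]
    rw [hσherm]
    simp [Complex.conj_ofReal]
  · intro x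
    have hlamQ : ∀ i, (lam : ℂ) • Q i = (U i)ᴴ * (∑ j, P i j) * U i := by
      intro i
      rw [hQdef]
      rw [smul_smul, ← Complex.ofReal_mul, mul_inv_cancel₀ hlampos.ne']
      simp
    set u : A → B → ℂ := fun i => (U i) *ᵥ (subv x i) with hudef
    have hexp : star x ⬝ᵥ ((lam : ℂ) • σ - ρ) *ᵥ x
        = ∑ i, ∑ j, (star (u i) ⬝ᵥ P i j *ᵥ u i - star (u i) ⬝ᵥ P i j *ᵥ u j) := by
      rw [Matrix.sub_mulVec, dotProduct_sub, Matrix.smul_mulVec,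
        dotProduct_smul]
      have e1 : (lam : ℂ) • (∑ i, ∑ j, star (subv x i) ⬝ᵥ blockB σ i j *ᵥ subv x j)
          = ∑ i, ∑ j, star (u i) ⬝ᵥ P i j *ᵥ u i := by
        rw [Finset.smul_sum]
        apply Finset.sum_congr rfl
        intro i _
        have hz : ∀ j, star (subv x i) ⬝ᵥ blockB σ i j *ᵥ subv x j
            = if i = j then star (subv x i) ⬝ᵥ Q i *ᵥ subv x i else 0 := by
          intro j
          by_cases h : i = j
          · subst h; simp [hσblock]
          · simp [hσblock, h]
        rw [Finset.sum_congr rfl fun j (_ : j ∈ Finset.univ) => hz j, Finset.sum_ite_eq,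
          if_pos (Finset.mem_univ i), ← dotProduct_smul, ← Matrix.smul_mulVec,
          hlamQ i, conj_quad, sum_mulVec', dotProduct_sum']
      have e2 : (∑ i, ∑ j, star (subv x i) ⬝ᵥ blockB ρ i j *ᵥ subv x j)
          = ∑ i, ∑ j, star (u i) ⬝ᵥ P i j *ᵥ u j := by
        apply Finset.sum_congr rfl; intro i _
        apply Finset.sum_congr rfl; intro j _
        rw [hrec i j, conj_quad]
      rw [quad_blockB σ x, quad_blockB ρ x, e1, e2, ← Finset.sum_sub_distrib]
      exact Finset.sum_congr rfl fun i _ => (Finset.sum_sub_distrib _ _).symm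
    have hsym1 : (∑ i, ∑ j, star (u j) ⬝ᵥ P i j *ᵥ u j)
        = ∑ i, ∑ j, star (u i) ⬝ᵥ P i j *ᵥ u i := by
      rw [Finset.sum_comm]
      apply Finset.sum_congr rfl; intro i _
      apply Finset.sum_congr rfl; intro j _
      rw [hPsymm i j]
    have hsym2 : (∑ i, ∑ j, star (u j) ⬝ᵥ P i j *ᵥ u i)
        = ∑ i, ∑ j, star (u i) ⬝ᵥ P i j *ᵥ u j := by
      rw [Finset.sum_comm]
      apply Finset.sum_congr rfl; intro i _
      apply Finset.sum_congr rfl; intro j _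
      rw [hPsymm i j]
    have hdouble : (∑ i, ∑ j, star (u i - u j) ⬝ᵥ P i j *ᵥ (u i - u j))
        = 2 * ∑ i, ∑ j, (star (u i) ⬝ᵥ P i j *ᵥ u i - star (u i) ⬝ᵥ P i j *ᵥ u j) := by
      have expand : ∀ i j, star (u i - u j) ⬝ᵥ P i j *ᵥ (u i - u j)
          = star (u i) ⬝ᵥ P i j *ᵥ u i - star (u i) ⬝ᵥ P i j *ᵥ u j
            - star (u j) ⬝ᵥ P i j *ᵥ u i + star (u j) ⬝ᵥ P i j *ᵥ u j := by
        intro i j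
        rw [star_sub, Matrix.mulVec_sub, sub_dotProduct, dotProduct_sub,
          dotProduct_sub]
        ring
      rw [Finset.sum_congr rfl fun i (_ : i ∈ Finset.univ) =>
        Finset.sum_congr rfl fun j (_ : j ∈ Finset.univ) => expand i j]
      simp only [Finset.sum_add_distrib, Finset.sum_sub_distrib]
      rw [hsym1, hsym2]
      ring
    have h2 : (0:ℂ) ≤ ∑ i, ∑ j, star (u i - u j) ⬝ᵥ P i j *ᵥ (u i - u j) :=
      Finset.sum_nonneg fun i _ => Finset.sum_nonneg fun j _ => (hPsd i j).dotProduct_mulVec_nonneg _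
    rw [hdouble] at h2
    have hhalf : (0:ℂ) ≤ (2⁻¹ : ℂ) := by
      rw [show ((2⁻¹ : ℂ)) = ((2⁻¹ : ℝ) : ℂ) by norm_num]
      exact Complex.zero_le_real.mpr (by norm_num)
    have h4 := mul_nonneg hhalf h2
    rw [← mul_assoc] at h4
    have h5 : (2⁻¹ : ℂ) * 2 = 1 := by norm_num
    rw [h5, one_mul] at h4
    rw [hexp]
    exact h4

lemma CIQl1_nonneg {A B : Type*} [Fintype A] [Fintype B] [DecidableEq A] [DecidableEq B]
    (ρ : Matrix (A × B) (A × B) ℂ) : 0 ≤ CIQl1 ρ := by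
  refine Finset.sum_nonneg fun i _ => Finset.sum_nonneg fun j _ => ?_
  split
  · exact le_refl 0
  · exact traceNorm_nonneg _

lemma master {A B : Type*} [Fintype A] [Fintype B] [DecidableEq A] [DecidableEq B]
    (ρ : Matrix (A × B) (A × B) ℂ) (hρ : ρ.PosSemidef) (htr : ρ.trace = 1)
    (U : A → Matrix B B ℂ) (hU : ∀ i, U i ∈ Matrix.unitaryGroup B ℂ)
    (P : A → A → Matrix B B ℂ)
    (hP : ∀ i j, U i * blockB ρ i j * (U j)ᴴ = P i j)
    (hPsd : ∀ i j, (P i j).PosSemidef)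
    (hPtr : ∀ i j, i ≠ j → (P i j).trace = (traceNorm (blockB ρ i j) : ℂ)) :
    CmaxIQ ρ = Real.logb 2 (1 + CIQl1 ρ) := by
  have hC : 0 ≤ CIQl1 ρ := CIQl1_nonneg ρ
  have hPtrace : ∑ i, ∑ j, (P i j).trace = ((1 + CIQl1 ρ : ℝ) : ℂ) := by
    have hdiag : ∀ i, (P i i).trace = (blockB ρ i i).trace := by
      intro i
      rw [← hP i i, Matrix.trace_mul_cycle, ← Matrix.star_eq_conjTranspose,
        Matrix.mem_unitaryGroup_iff'.mp (hU i), Matrix.one_mul]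
    have hsplit : ∀ i j, (P i j).trace = (if i = j then (blockB ρ i i).trace else 0)
        + (if i = j then 0 else (traceNorm (blockB ρ i j) : ℂ)) := by
      intro i j; by_cases h : i = j
      · subst h; simp [hdiag]
      · simp [h, hPtr i j h]
    rw [Finset.sum_congr rfl fun i _ => Finset.sum_congr rfl fun j _ => hsplit i j]
    simp only [Finset.sum_add_distrib]
    have h1 : ∑ i, ∑ j, (if i = j then (blockB ρ i i).trace else 0) = 1 := by
      have h0 : ∀ i : A, ∑ j, (if i = j then (blockB ρ i i).trace else 0)
          = (blockB ρ i i).trace := by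
        intro i; rw [Finset.sum_ite_eq]; simp
      rw [Finset.sum_congr rfl fun i _ => h0 i, ← trace_eq_sum_blockB, htr]
    have h2 : ∑ i, ∑ j, (if i = j then 0 else (traceNorm (blockB ρ i j) : ℂ))
        = ((CIQl1 ρ : ℝ) : ℂ) := by
      rw [CIQl1, Complex.ofReal_sum]
      apply Finset.sum_congr rfl; intro i _
      rw [Complex.ofReal_sum]
      apply Finset.sum_congr rfl; intro j _
      split <;> simp
    rw [h1, h2]
    push_cast
    ring
  obtain ⟨σ, hσmem, hσpsd⟩ := upper_bound ρ hρ htr U hU P hP hPsd hPtrace hC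
  have hlb : ∀ l ∈ {l : ℝ | ∃ σ ∈ IQstates A B, ((l : ℂ) • σ - ρ).PosSemidef},
      1 + CIQl1 ρ ≤ l := by
    rintro l ⟨σ', h1, h2⟩
    exact lower_bound ρ U hU P hP hPtrace h1 h2
  have hmem : (1 + CIQl1 ρ) ∈ {l : ℝ | ∃ σ ∈ IQstates A B, ((l : ℂ) • σ - ρ).PosSemidef} :=
    ⟨σ, hσmem, by exact_mod_cast hσpsd⟩
  have hSinf : sInf {l : ℝ | ∃ σ ∈ IQstates A B, ((l : ℂ) • σ - ρ).PosSemidef}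
      = 1 + CIQl1 ρ :=
    le_antisymm (csInf_le ⟨1 + CIQl1 ρ, hlb⟩ hmem) (le_csInf ⟨_, hmem⟩ hlb)
  rw [CmaxIQ, hSinf]

section rankone

variable {n : Type*} [Fintype n] [DecidableEq n]

noncomputable def vnrm {n : Type*} [Fintype n] (v : n → ℂ) : ℝ :=
  Real.sqrt (∑ b, Complex.normSq (v b))

lemma vnrm_nonneg (v : n → ℂ) : 0 ≤ vnrm v := Real.sqrt_nonneg _

lemma star_dot_self (v : n → ℂ) :
    star v ⬝ᵥ v = ((∑ b, Complex.normSq (v b) : ℝ) : ℂ) := by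
  push_cast
  simp only [dotProduct, Pi.star_apply]
  exact Finset.sum_congr rfl fun b _ => by
    simp [Complex.star_def, mul_comm, Complex.mul_conj]

lemma sum_normSq_eq_zero_iff (v : n → ℂ) : (∑ b, Complex.normSq (v b)) = 0 ↔ v = 0 := by
  constructor
  · intro h
    ext b
    have := (Finset.sum_eq_zero_iff_of_nonneg fun b _ => Complex.normSq_nonneg _).mp h b (by simp)
    simpa [Complex.normSq_eq_zero] using this
  · intro h; simp [h]

lemma vecMulVec_conjT (v w : n → ℂ) :
    (Matrix.vecMulVec v (star w))ᴴ = Matrix.vecMulVec w (star v) := by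
  ext b b'
  simp only [Matrix.conjTranspose_apply, Matrix.vecMulVec_apply, Pi.star_apply, star_mul',
    star_star]
  ring

lemma vecMulVec_mul (a b c d : n → ℂ) :
    Matrix.vecMulVec a b * Matrix.vecMulVec c d = (b ⬝ᵥ c) • Matrix.vecMulVec a d := by
  ext x y
  simp only [Matrix.mul_apply, Matrix.vecMulVec_apply, Matrix.smul_apply, dotProduct,
    smul_eq_mul, Finset.sum_mul, Finset.mul_sum]
  apply Finset.sum_congr rfl
  intro z _
  ring

lemma mul_vecMulVec (M : Matrix n n ℂ) (a b : n → ℂ) :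
    M * Matrix.vecMulVec a b = Matrix.vecMulVec (M *ᵥ a) b := by
  ext x y
  simp only [Matrix.mul_apply, Matrix.vecMulVec_apply, Matrix.mulVec, dotProduct,
    Finset.sum_mul]
  apply Finset.sum_congr rfl
  intro z _
  ring

lemma vecMulVec_mul_conjT (a b : n → ℂ) (M : Matrix n n ℂ) :
    Matrix.vecMulVec a (star b) * Mᴴ = Matrix.vecMulVec a (star (M *ᵥ b)) := by
  ext x y
  simp only [Matrix.mul_apply, Matrix.vecMulVec_apply, Matrix.conjTranspose_apply,
    Matrix.mulVec, dotProduct, Pi.star_apply, star_sum, star_mul', star_star,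
    Finset.mul_sum]
  apply Finset.sum_congr rfl
  intro z _
  ring

lemma trace_vecMulVec_self (w : n → ℂ) :
    (Matrix.vecMulVec w (star w)).trace = ((∑ b, Complex.normSq (w b) : ℝ) : ℂ) := by
  push_cast
  simp only [Matrix.trace, Matrix.diag, Matrix.vecMulVec_apply, Pi.star_apply]
  exact Finset.sum_congr rfl fun b _ => Complex.mul_conj _

lemma smul_vecMulVec (c : ℂ) (a b : n → ℂ) :
    Matrix.vecMulVec (c • a) b = c • Matrix.vecMulVec a b := by
  ext x y
  simp [Matrix.vecMulVec_apply, mul_assoc]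

lemma vecMulVec_star_smul (c : ℂ) (a b : n → ℂ) :
    Matrix.vecMulVec a (star (c • b)) = (starRingEnd ℂ c) • Matrix.vecMulVec a (star b) := by
  ext x y
  simp only [Matrix.vecMulVec_apply, Pi.star_apply, Pi.smul_apply, smul_eq_mul, star_mul',
    Matrix.smul_apply, Complex.star_def]
  ring

lemma traceNorm_rankOne (v w : n → ℂ) :
    traceNorm (Matrix.vecMulVec v (star w)) = vnrm v * vnrm w := by
  have hMM : (Matrix.vecMulVec v (star w))ᴴ * (Matrix.vecMulVec v (star w))
      = (((∑ b, Complex.normSq (v b) : ℝ)) : ℂ) • Matrix.vecMulVec w (star w) := by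
    rw [vecMulVec_conjT, _root_.vecMulVec_mul, star_dot_self]
  by_cases hw : w = 0
  · have hM0 : Matrix.vecMulVec v (star w) = 0 := by
      subst hw; ext x y; simp [Matrix.vecMulVec_apply]
    have h0 : (0 : Matrix n n ℂ)
        = (posSemidefSqrtOld (Matrix.posSemidef_conjTranspose_mul_self (Matrix.vecMulVec v (star w)))) :=
      eq_sqrtOld_of_sq_eq Matrix.PosSemidef.zero _ (by rw [hM0]; simp)
    rw [traceNorm, ← h0]
    subst hw
    simp [vnrm]
  · have hsw : 0 < ∑ b, Complex.normSq (w b) := by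
      rcases lt_or_eq_of_le (Finset.sum_nonneg fun b _ => Complex.normSq_nonneg (w b)) with h | h
      · exact h
      · exact absurd ((sum_normSq_eq_zero_iff w).mp h.symm) hw
    set sv := ∑ b, Complex.normSq (v b) with hsvdef
    set sw := ∑ b, Complex.normSq (w b) with hswdef
    have hsv : 0 ≤ sv := Finset.sum_nonneg fun b _ => Complex.normSq_nonneg _
    set r : ℝ := Real.sqrt sv / Real.sqrt sw with hrdef
    have hR2 : (((r : ℝ) : ℂ) • Matrix.vecMulVec w (star w)) ^ 2
        = (Matrix.vecMulVec v (star w))ᴴ * (Matrix.vecMulVec v (star w)) := by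
      rw [hMM, pow_two, Matrix.smul_mul, Matrix.mul_smul, _root_.vecMulVec_mul, star_dot_self,
        smul_smul, smul_smul, ← hswdef]
      congr 1
      rw [← Complex.ofReal_mul, ← Complex.ofReal_mul]
      congr 1
      rw [hrdef]
      rw [div_mul_div_comm, Real.mul_self_sqrt hsv, Real.mul_self_sqrt hsw.le]
      field_simp
    have hRpsd : ((((r : ℝ)) : ℂ) • Matrix.vecMulVec w (star w)).PosSemidef :=
      psd_real_smul (psd_vecMulVec w) (div_nonneg (Real.sqrt_nonneg _) (Real.sqrt_nonneg _))
    have heq := eq_sqrtOld_of_sq_eq hRpsd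
      (Matrix.posSemidef_conjTranspose_mul_self (Matrix.vecMulVec v (star w))) hR2
    rw [traceNorm, ← heq, Matrix.trace_smul, trace_vecMulVec_self, ← hswdef, smul_eq_mul,
      ← Complex.ofReal_mul, Complex.ofReal_re]
    rw [hrdef, vnrm, vnrm, ← hsvdef, ← hswdef]
    rw [div_mul_eq_mul_div, eq_comm, eq_div_iff (Real.sqrt_ne_zero'.mpr hsw)]
    rw [mul_assoc, Real.mul_self_sqrt hsw.le]

end rankone

section householder

variable {n : Type*} [Fintype n] [DecidableEq n]

lemma vecMulVec_mulVec (a b x : n → ℂ) :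
    (Matrix.vecMulVec a b) *ᵥ x = (b ⬝ᵥ x) • a := by
  ext y
  simp only [Matrix.mulVec, Matrix.vecMulVec_apply, dotProduct, Pi.smul_apply,
    smul_eq_mul, Finset.sum_mul, Finset.mul_sum]
  apply Finset.sum_congr rfl
  intro z _
  ring

lemma star_single_dot (b0 : n) (v : n → ℂ) :
    star (Pi.single b0 (1:ℂ)) ⬝ᵥ v = v b0 := by
  simp [dotProduct, Pi.single_apply, eq_comm]

lemma star_dot_single (b0 : n) (v : n → ℂ) :
    star v ⬝ᵥ (Pi.single b0 (1:ℂ)) = (starRingEnd ℂ) (v b0) := by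
  simp [dotProduct, Pi.single_apply, Complex.star_def]

lemma exists_unitary_to_single (b0 : n) (v : n → ℂ) :
    ∃ W ∈ Matrix.unitaryGroup n ℂ, W *ᵥ v = ((vnrm v : ℝ) : ℂ) • (Pi.single b0 1 : n → ℂ) := by
  classical
  set c : ℂ := v b0 with hcdef
  set Nc : ℂ := ((vnrm v : ℝ) : ℂ) with hNdef
  set μ : ℂ := if c = 0 then 1 else c / ((‖c‖ : ℝ) : ℂ) with hμdef
  have habs : c ≠ 0 → ((‖c‖ : ℝ) : ℂ) ≠ 0 := fun hc => by
    exact_mod_cast (norm_ne_zero_iff.mpr hc)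
  have hμ1 : (starRingEnd ℂ) μ * μ = 1 := by
    by_cases hc : c = 0
    · simp [hμdef, hc]
    · rw [hμdef, if_neg hc, map_div₀, Complex.conj_ofReal, div_mul_div_comm,
        mul_comm ((starRingEnd ℂ) c) c, Complex.mul_conj, ← Complex.ofReal_mul,
        Complex.normSq_eq_norm_sq, pow_two]
      have h2 : (‖c‖) * (‖c‖) ≠ 0 :=
        mul_ne_zero (norm_ne_zero_iff.mpr hc) (norm_ne_zero_iff.mpr hc)
      exact div_self (by exact_mod_cast h2)
  have hμc : μ * (starRingEnd ℂ) c = (starRingEnd ℂ) μ * c := by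
    by_cases hc : c = 0
    · simp [hc]
    · rw [hμdef, if_neg hc, map_div₀, Complex.conj_ofReal, div_mul_eq_mul_div,
        div_mul_eq_mul_div, mul_comm c ((starRingEnd ℂ) c)]
  have hvv : star v ⬝ᵥ v = Nc ^ 2 := by
    rw [star_dot_self, hNdef, ← Complex.ofReal_pow, vnrm,
      Real.sq_sqrt (Finset.sum_nonneg fun b _ => Complex.normSq_nonneg _)]
  set k : ℂ := μ * Nc with hkdef
  set e : n → ℂ := Pi.single b0 1 with hedef
  set w : n → ℂ := v - k • e with hwdef
  have hwv : star w ⬝ᵥ v = Nc ^ 2 - (starRingEnd ℂ) k * c := by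
    rw [hwdef, star_sub, sub_dotProduct, hvv, star_smul, smul_dotProduct,
      hedef, star_single_dot, ← hcdef]
    simp [smul_eq_mul, Complex.star_def]
  have hww : star w ⬝ᵥ w = 2 * (star w ⬝ᵥ v) := by
    have h1 : star w ⬝ᵥ w = star w ⬝ᵥ v - k * ((starRingEnd ℂ) c - (starRingEnd ℂ) k) := by
      rw [hwdef, dotProduct_sub, dotProduct_smul]
      congr 1
      have h2 : star (v - k • e) ⬝ᵥ e = (starRingEnd ℂ) c - (starRingEnd ℂ) k := by
        rw [star_sub, sub_dotProduct, star_smul, smul_dotProduct,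
          hedef, star_dot_single, ← hcdef]
        have : star (Pi.single b0 (1:ℂ)) ⬝ᵥ Pi.single b0 (1:ℂ) = 1 := by
          rw [star_single_dot]; simp
        rw [this]
        simp [smul_eq_mul, Complex.star_def]
      rw [h2, smul_eq_mul]
    rw [h1, hwv, hkdef]
    have hNreal : (starRingEnd ℂ) Nc = Nc := by rw [hNdef, Complex.conj_ofReal]
    simp only [_root_.map_mul, hNreal]
    linear_combination (Nc ^ 2) * hμ1 - Nc * hμc
  by_cases hw0 : w = 0
  · refine ⟨(starRingEnd ℂ) μ • (1 : Matrix n n ℂ), ?_, ?_⟩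
    · rw [Matrix.mem_unitaryGroup_iff']
      rw [star_smul, star_one, Complex.star_def, Complex.conj_conj, smul_mul_smul_comm,
        one_mul, mul_comm μ ((starRingEnd ℂ) μ), hμ1, one_smul]
    · have hveq : v = k • e := by
        have := sub_eq_zero.mp (hwdef ▸ hw0)
        exact this
      rw [Matrix.smul_mulVec, Matrix.one_mulVec, hveq, smul_smul, hkdef,
        ← mul_assoc, hμ1, one_mul, hedef]
  · have hsnw : star w ⬝ᵥ w = ((∑ b, Complex.normSq (w b) : ℝ) : ℂ) := star_dot_self w
    have hsnwpos : 0 < ∑ b, Complex.normSq (w b) := by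
      rcases lt_or_eq_of_le (Finset.sum_nonneg fun b _ => Complex.normSq_nonneg (w b)) with h | h
      · exact h
      · exact absurd ((sum_normSq_eq_zero_iff w).mp h.symm) hw0
    set snw : ℝ := ∑ b, Complex.normSq (w b) with hsnwdef
    set γ : ℂ := ((2 / snw : ℝ) : ℂ) with hγdef
    set V : Matrix n n ℂ := Matrix.vecMulVec w (star w) with hVdef
    have hγsnw : γ * (snw : ℂ) = 2 := by
      rw [hγdef, ← Complex.ofReal_mul, div_mul_cancel₀ _ hsnwpos.ne']
      norm_num
    set H : Matrix n n ℂ := 1 - γ • V with hHdef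
    have hVV : V * V = ((snw : ℝ) : ℂ) • V := by
      rw [hVdef, _root_.vecMulVec_mul, hsnwdef, star_dot_self]
    have hco : γ * γ * ((snw : ℝ) : ℂ) = γ + γ := by linear_combination γ * hγsnw
    have hVV2 : (γ • V) * (γ • V) = (γ * γ * ((snw : ℝ) : ℂ)) • V := by
      rw [Matrix.smul_mul, Matrix.mul_smul, hVV, smul_smul, smul_smul]
    have hHH : H * H = 1 := by
      rw [hHdef, Matrix.sub_mul, Matrix.one_mul, Matrix.mul_sub, Matrix.mul_one, hVV2, hco,
        add_smul]
      abel
    have hHerm : Hᴴ = H := by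
      rw [hHdef, Matrix.conjTranspose_sub, Matrix.conjTranspose_one,
        Matrix.conjTranspose_smul, hVdef, vecMulVec_conjT]
      congr 1
      rw [hγdef, Complex.star_def, Complex.conj_ofReal]
    refine ⟨(starRingEnd ℂ) μ • H, ?_, ?_⟩
    · rw [Matrix.mem_unitaryGroup_iff']
      rw [star_smul, Complex.star_def, Complex.conj_conj, Matrix.star_eq_conjTranspose,
        hHerm, smul_mul_smul_comm, hHH, mul_comm μ ((starRingEnd ℂ) μ), hμ1, one_smul]
    · have hwvval : γ * (star w ⬝ᵥ v) = 1 := by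
        have h3 : star w ⬝ᵥ v = ((snw : ℝ) : ℂ) / 2 := by
          have h4 : 2 * (star w ⬝ᵥ v) = ((snw : ℝ) : ℂ) := by rw [← hww, hsnw]
          rw [eq_div_iff (two_ne_zero : (2:ℂ) ≠ 0)]
          linear_combination h4
        rw [h3, hγdef]
        push_cast
        field_simp
      have hHv : H *ᵥ v = k • e := by
        rw [hHdef, Matrix.sub_mulVec, Matrix.one_mulVec, Matrix.smul_mulVec,
          hVdef, _root_.vecMulVec_mulVec, smul_smul, hwvval, one_smul, hwdef]
        abel
      rw [Matrix.smul_mulVec, hHv, smul_smul, hkdef, ← mul_assoc, hμ1, one_mul]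

end householder

/-- if there is a unitary U_AB = Σ_i |i⟩⟨i| ⊗ U^B_i with
U^B_i ρ^B_{ij} (U^B_j)† = |ρ^B_{ij}| for all i, j, then
C^{A|B}_max(ρ) = log₂(1 + C^{A|B}_{l1}(ρ)); in particular this equality holds for
every bipartite pure state. -/
theorem CmaxIQ_eq_log_CIQl1 {A B : Type*} [Fintype A] [Fintype B] [DecidableEq A]
    [DecidableEq B] :
    (∀ (ρ : Matrix (A × B) (A × B) ℂ), ρ.PosSemidef → ρ.trace = 1 →
      ∀ U : A → Matrix B B ℂ, (∀ i, U i ∈ Matrix.unitaryGroup B ℂ) →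
      (∀ i j, U i * blockB ρ i j * (U j).conjTranspose =
        (posSemidefSqrtOld (Matrix.posSemidef_conjTranspose_mul_self (blockB ρ i j)))) →
      CmaxIQ ρ = Real.logb 2 (1 + CIQl1 ρ)) ∧
    (∀ ψ : A × B → ℂ, (∑ x, Complex.normSq (ψ x)) = 1 →
      CmaxIQ (Matrix.vecMulVec ψ (star ψ)) =
        Real.logb 2 (1 + CIQl1 (Matrix.vecMulVec ψ (star ψ)))) := by
  constructor
  · intro ρ hρ htr U hU hsqrt
    exact master ρ hρ htr U hU
      (fun i j => (posSemidefSqrtOld (Matrix.posSemidef_conjTranspose_mul_self (blockB ρ i j))))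
      hsqrt
      (fun i j => (posSemidef_sqrtOld (Matrix.posSemidef_conjTranspose_mul_self (blockB ρ i j))))
      (fun i j _ => traceNorm_coe (blockB ρ i j))
  · intro ψ hψ
    have hρ : (Matrix.vecMulVec ψ (star ψ)).PosSemidef := psd_vecMulVec ψ
    have htr : (Matrix.vecMulVec ψ (star ψ)).trace = 1 := by
      rw [trace_vecMulVec_self, hψ]; norm_num
    have hABne : Nonempty (A × B) := by
      by_contra h
      rw [not_nonempty_iff] at h
      rw [Finset.univ_eq_empty, Finset.sum_empty] at hψ
      exact one_ne_zero hψ.symm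
    have hBne : Nonempty B := ⟨hABne.some.2⟩
    set b0 : B := hBne.some with hb0def
    have hex : ∀ i : A, ∃ W ∈ Matrix.unitaryGroup B ℂ,
        W *ᵥ (subv ψ i) = ((vnrm (subv ψ i) : ℝ) : ℂ) • (Pi.single b0 1 : B → ℂ) :=
      fun i => exists_unitary_to_single b0 (subv ψ i)
    choose W hWmem hWmap using hex
    have hblock : ∀ i j, blockB (Matrix.vecMulVec ψ (star ψ)) i j
        = Matrix.vecMulVec (subv ψ i) (star (subv ψ j)) := by
      intro i j; ext b b'
      simp [blockB, Matrix.vecMulVec_apply, subv]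
    set e0 : B → ℂ := Pi.single b0 1 with he0def
    have htrE : (Matrix.vecMulVec e0 (star e0)).trace = 1 := by
      rw [trace_vecMulVec_self]
      have : ∑ b, Complex.normSq (e0 b) = 1 := by
        rw [he0def]
        simp [Pi.single_apply, apply_ite Complex.normSq]
      rw [this]; norm_num
    refine master (Matrix.vecMulVec ψ (star ψ)) hρ htr W hWmem
      (fun i j => ((vnrm (subv ψ i) * vnrm (subv ψ j) : ℝ) : ℂ)
        • Matrix.vecMulVec e0 (star e0)) ?_ ?_ ?_
    · intro i j
      rw [hblock, _root_.mul_vecMulVec, vecMulVec_mul_conjT, hWmap i, hWmap j,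
        _root_.smul_vecMulVec, vecMulVec_star_smul, smul_smul]
      congr 1
      rw [Complex.conj_ofReal, ← Complex.ofReal_mul]
    · intro i j
      exact psd_real_smul (psd_vecMulVec e0) (mul_nonneg (vnrm_nonneg _) (vnrm_nonneg _))
    · intro i j _
      rw [Matrix.trace_smul, htrE, smul_eq_mul, mul_one, hblock, traceNorm_rankOne]
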